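/- arXiv:1903.04970 — 6 statements merged into one kernel-verified Lean document; each statement's English description precedes it below -/
import Mathlib

section
/- Let g ∈ (0,1] and d ≥ 1. If a probability vector f ∈ ℝ^d with decreasing entries satisfies f_i ≤ g·f_{i−1} for all i = 1,…,d−1 and f is majorized by p*(g,d), then f = p*(g,d). -/
open Filter Topology Kronecker Matrix
open scoped ComplexOrder

/-- Sum of the `k` largest entries of a real vector (maximum of all `k`-element subset sums). -/
noncomputable def sumKLargest {ι : Type*} [Fintype ι] (v : ι → ℝ) (k : ℕ) : ℝ :=
  sSup {x : ℝ | ∃ s : Finset ι, s.card = k ∧ ∑ i ∈ s, v i = x}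

/-- `IsMajorizedBy x y` means `x ≺ y`: same total sum, and for every `k = 1,…,n` the
sum of the `k` largest entries of `x` is at most that of `y`. -/
def IsMajorizedBy {ι : Type*} [Fintype ι] (x y : ι → ℝ) : Prop :=
  (∑ i, x i = ∑ i, y i) ∧
  ∀ k : ℕ, 1 ≤ k → k ≤ Fintype.card ι → sumKLargest x k ≤ sumKLargest y k

/-- The decreasing rearrangement of a real vector. -/
noncomputable def sortDesc {n : ℕ} (v : Fin n → ℝ) : Fin n → ℝ :=
  fun i => v (Tuple.sort v i.rev)

/-- The geometric probability vector `p*(g,d)` with entries `g^i / ∑_j g^j`. -/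
noncomputable def pstar (g : ℝ) (d : ℕ) : Fin d → ℝ :=
  fun i => g ^ (i : ℕ) / ∑ j : Fin d, g ^ (j : ℕ)

/-- The Gibbs probability vector at inverse temperature `β` for energies `E`. -/
noncomputable def gibbsVec {m : ℕ} (β : ℝ) (E : Fin m → ℝ) : Fin m → ℝ :=
  fun j => Real.exp (-(β * E j)) / ∑ k : Fin m, Real.exp (-(β * E k))

/-- The Gibbs state: diagonal density matrix with the Gibbs vector on the diagonal. -/
noncomputable def gibbsState {m : ℕ} (β : ℝ) (E : Fin m → ℝ) : Matrix (Fin m) (Fin m) ℂ :=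
  Matrix.diagonal fun j => (gibbsVec β E j : ℂ)

/-- The eigenvalues of a Hermitian matrix (junk value `0` if not Hermitian). -/
noncomputable def eigVec {ι : Type*} [Fintype ι] [DecidableEq ι] (ρ : Matrix ι ι ℂ) : ι → ℝ := by
  classical exact if h : ρ.IsHermitian then h.eigenvalues else 0

/-- The eigenvalue vector of a Hermitian matrix, listed in decreasing order. -/
noncomputable def eigVecDesc {d : ℕ} (ρ : Matrix (Fin d) (Fin d) ℂ) : Fin d → ℝ :=
  sortDesc (eigVec ρ)

/-- Partial trace over the machine: `(Tr_M X)_{s,s'} = ∑_m X_{(s,m),(s',m)}`. -/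
noncomputable def ptraceM {dS dM : ℕ}
    (X : Matrix (Fin dS × Fin dM) (Fin dS × Fin dM) ℂ) : Matrix (Fin dS) (Fin dS) ℂ :=
  Matrix.of fun s s' => ∑ m : Fin dM, X (s, m) (s', m)

/-- The coherent operation `Λ_U(ρ) = Tr_M (U (ρ ⊗ τ_M) U†)` where `τ_M` is the diagonal
machine state with diagonal `τ`. -/
noncomputable def coherentOp {dS dM : ℕ} (τ : Fin dM → ℝ)
    (U : Matrix (Fin dS × Fin dM) (Fin dS × Fin dM) ℂ)
    (ρ : Matrix (Fin dS) (Fin dS) ℂ) : Matrix (Fin dS) (Fin dS) ℂ :=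
  ptraceM (U * (ρ ⊗ₖ Matrix.diagonal fun j => (τ j : ℂ)) * Uᴴ)

/-- `Λ_{U_n} ∘ ⋯ ∘ Λ_{U_1} (ρ)`: the machine is reset to its Gibbs state before each cycle. -/
noncomputable def coherentSeq {dS dM : ℕ} (τ : Fin dM → ℝ) {n : ℕ}
    (U : Fin n → Matrix (Fin dS × Fin dM) (Fin dS × Fin dM) ℂ)
    (ρ : Matrix (Fin dS) (Fin dS) ℂ) : Matrix (Fin dS) (Fin dS) ℂ :=
  (List.ofFn U).foldl (fun σ V => coherentOp τ V σ) ρ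

/-- The optimal coherent operation `A`: the diagonal matrix whose `i`-th diagonal entry is
`∑_{j<d_M} λ_{i·d_M+j}` where `λ` is the decreasing list of eigenvalues of `ρ ⊗ τ_M`. -/
noncomputable def Aopt {dS dM : ℕ} (τ : Fin dM → ℝ)
    (ρ : Matrix (Fin dS) (Fin dS) ℂ) : Matrix (Fin dS) (Fin dS) ℂ :=
  Matrix.diagonal fun i : Fin dS =>
    ((∑ j : Fin dM,
      sortDesc
        (fun k : Fin (dS * dM) =>
          eigVec (ρ ⊗ₖ Matrix.diagonal fun l => (τ l : ℂ)) (finProdFinEquiv.symm k))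
        ⟨(i : ℕ) * dM + (j : ℕ), by
          calc (i : ℕ) * dM + (j : ℕ) < (i : ℕ) * dM + dM := by
                exact Nat.add_lt_add_left j.isLt _
            _ = ((i : ℕ) + 1) * dM := by ring
            _ ≤ dS * dM := Nat.mul_le_mul_right dM i.isLt⟩ : ℝ) : ℂ)

/-- `Δ_i(p) = a·p_i − b·p_{i−1}` for `i ≥ 1` (and `0` for `i = 0`). -/
noncomputable def delta (a b : ℝ) {d : ℕ} (p : Fin d → ℝ) (i : Fin d) : ℝ :=
  if (i : ℕ) = 0 then 0
  else a * p i - b * p ⟨(i : ℕ) - 1, Nat.lt_of_le_of_lt (Nat.sub_le _ _) i.isLt⟩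

/-- The max-swap map `B`: if some `Δ_i(p) > 0`, pick an index `k̄` maximizing `Δ`,
move `Δ_{k̄}(p)` of population from level `k̄` to level `k̄−1`, and rearrange decreasingly;
otherwise `p` is left unchanged. -/
noncomputable def maxSwap (a b : ℝ) {d : ℕ} (p : Fin d → ℝ) : Fin d → ℝ := by
  classical
  exact
    if h : ∃ k : Fin d, 0 < delta a b p k ∧ ∀ i, delta a b p i ≤ delta a b p k then
      sortDesc (fun i =>
        if i = h.choose then p h.choose - delta a b p h.choose
        else if (i : ℕ) = (h.choose : ℕ) - 1 then p i + delta a b p h.choose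
        else p i)
    else p
lemma strictMono_val_le {k d : ℕ} {e : Fin k → Fin d} (he : StrictMono e) :
    ∀ j : Fin k, (j : ℕ) ≤ (e j : ℕ) := by
  suffices h : ∀ n (hn : n < k), n ≤ (e ⟨n, hn⟩ : ℕ) by
    intro j; simpa using h j j.2
  intro n
  induction n with
  | zero => intro hn; exact Nat.zero_le _
  | succ m ih =>
    intro hn
    have hm : m < k := Nat.lt_of_succ_lt hn
    have h1 : e ⟨m, hm⟩ < e ⟨m + 1, hn⟩ := he (by simp [Fin.lt_def])
    have h2 := ih hm
    have h3 : (e ⟨m, hm⟩ : ℕ) < (e ⟨m + 1, hn⟩ : ℕ) := h1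
    omega

lemma sumKLargest_antitone {d : ℕ} (v : Fin d → ℝ) (hv : Antitone v) {k : ℕ} (hk : k ≤ d) :
    sumKLargest v k = ∑ i ∈ Finset.univ.filter (fun i : Fin d => (i : ℕ) < k), v i := by
  classical
  have htset : (Finset.univ.filter (fun i : Fin d => (i : ℕ) < k)) =
      Finset.map (Fin.castLEEmb hk) Finset.univ := by
    ext i
    simp only [Finset.mem_filter, Finset.mem_univ, true_and, Finset.mem_map]
    constructor
    · intro hi
      exact ⟨⟨i, hi⟩, by simp [Fin.ext_iff]⟩
    · rintro ⟨j, -, rfl⟩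
      exact j.2
  have hsum : (∑ i ∈ Finset.univ.filter (fun i : Fin d => (i : ℕ) < k), v i)
      = ∑ j : Fin k, v (Fin.castLE hk j) := by
    rw [htset, Finset.sum_map]; rfl
  apply IsGreatest.csSup_eq
  constructor
  · refine ⟨Finset.univ.filter (fun i : Fin d => (i : ℕ) < k), ?_, rfl⟩
    rw [htset, Finset.card_map, Finset.card_univ, Fintype.card_fin]
  · rintro x ⟨s, hcard, rfl⟩
    rw [hsum]
    have h1 : ∑ i ∈ s, v i = ∑ j : Fin k, v (s.orderEmbOfFin hcard j) := by
      rw [← Finset.sum_attach s v]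
      exact Fintype.sum_equiv (s.orderIsoOfFin hcard).symm.toEquiv _ _
        (fun x => by rw [← Finset.coe_orderIsoOfFin_apply]; simp)
    rw [h1]
    apply Finset.sum_le_sum
    intro j _
    apply hv
    have := strictMono_val_le (s.orderEmbOfFin hcard).strictMono j
    exact Fin.le_def.mpr (by simpa using this)

/-- If a decreasing probability vector `f` has successive ratios at most `g`
and is majorized by `p*(g,d)`, then `f = p*(g,d)`. -/
theorem ratio_and_majorized_implies_pstar {d : ℕ} (hd : 0 < d)
    (g : ℝ) (hg0 : 0 < g) (hg1 : g ≤ 1)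
    (f : Fin d → ℝ) (hnn : ∀ i, 0 ≤ f i) (hsum : ∑ i, f i = 1) (hdec : Antitone f)
    (hratio : ∀ i : Fin d, (i : ℕ) ≠ 0 →
      f i ≤ g * f ⟨(i : ℕ) - 1, Nat.lt_of_le_of_lt (Nat.sub_le _ _) i.isLt⟩)
    (hmaj : IsMajorizedBy f (pstar g d)) :
    f = pstar g d := by
    classical
  have hne : Nonempty (Fin d) := ⟨⟨0, hd⟩⟩
  set G : ℝ := ∑ j : Fin d, g ^ (j : ℕ) with hGdef
  have hGpos : 0 < G := Finset.sum_pos (fun i _ => pow_pos hg0 _) Finset.univ_nonempty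
  -- pstar is antitone
  have hpa : Antitone (pstar g d) := by
    intro i j hij
    unfold pstar
    exact (div_le_div_iff_of_pos_right hGpos).mpr (pow_le_pow_of_le_one hg0.le hg1 hij)
  -- key pairwise inequality
  have key : ∀ m i : Fin d, (i : ℕ) ≤ (m : ℕ) → g ^ (i : ℕ) * f m ≤ g ^ (m : ℕ) * f i := by
    have H : ∀ n : ℕ, ∀ m i : Fin d, (m : ℕ) = (i : ℕ) + n →
        g ^ (i : ℕ) * f m ≤ g ^ (m : ℕ) * f i := by
      intro n
      induction n with
      | zero =>
        intro m i h
        have : m = i := Fin.ext (by omega)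
        subst this; exact le_refl _
      | succ p ih =>
        intro m i h
        have hm0 : (m : ℕ) ≠ 0 := by omega
        set m' : Fin d := ⟨(m : ℕ) - 1, Nat.lt_of_le_of_lt (Nat.sub_le _ _) m.isLt⟩ with hm'
        have hr : f m ≤ g * f m' := hratio m hm0
        have ihm : g ^ (i : ℕ) * f m' ≤ g ^ (m' : ℕ) * f i := ih m' i (by simp [hm']; omega)
        have hgpow : (0:ℝ) ≤ g ^ (i : ℕ) := (pow_pos hg0 _).le
        have hmv : (m : ℕ) = (m' : ℕ) + 1 := by simp [hm']; omega
        calc g ^ (i : ℕ) * f m ≤ g ^ (i : ℕ) * (g * f m') := by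
              exact mul_le_mul_of_nonneg_left hr hgpow
          _ = g * (g ^ (i : ℕ) * f m') := by ring
          _ ≤ g * (g ^ (m' : ℕ) * f i) := mul_le_mul_of_nonneg_left ihm hg0.le
          _ = g ^ (m : ℕ) * f i := by rw [hmv]; ring
    intro m i h
    exact H ((m : ℕ) - (i : ℕ)) m i (by omega)
  -- partial sums
  set A : ℕ → ℝ := fun k => ∑ i ∈ Finset.univ.filter (fun i : Fin d => (i : ℕ) < k), f i with hA
  set B : ℕ → ℝ := fun k => ∑ i ∈ Finset.univ.filter (fun i : Fin d => ¬ (i : ℕ) < k), f i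
  set SA : ℕ → ℝ := fun k => ∑ i ∈ Finset.univ.filter (fun i : Fin d => (i : ℕ) < k),
    g ^ (i : ℕ) with hSA
  set SB : ℕ → ℝ := fun k => ∑ i ∈ Finset.univ.filter (fun i : Fin d => ¬ (i : ℕ) < k),
    g ^ (i : ℕ)
  have hsplitf : ∀ k, A k + B k = 1 := fun k => by
    rw [hA]; simp only []; rw [Finset.sum_filter_add_sum_filter_not]; exact hsum
  have hsplitg : ∀ k, SA k + SB k = G := fun k => by
    rw [hSA]; simp only []; rw [Finset.sum_filter_add_sum_filter_not]
  have hchain : ∀ k, B k * SA k ≤ A k * SB k := by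
    intro k
    rw [Finset.sum_mul_sum, Finset.sum_mul_sum, Finset.sum_comm]
    apply Finset.sum_le_sum
    intro i hi
    apply Finset.sum_le_sum
    intro m hm
    simp only [Finset.mem_filter] at hi hm
    have him : (i : ℕ) ≤ (m : ℕ) := by omega
    have := key m i him
    nlinarith [this]
  have hAge : ∀ k, SA k / G ≤ A k := by
    intro k
    rw [div_le_iff₀ hGpos]
    have e1 : A k * G = A k * SA k + A k * SB k := by rw [← hsplitg k]; ring
    have e2 : SA k = A k * SA k + B k * SA k := by
      calc SA k = (A k + B k) * SA k := by rw [hsplitf k]; ring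
        _ = A k * SA k + B k * SA k := by ring
    linarith [hchain k]
  -- pstar partial sums
  have hPp : ∀ k : ℕ, (∑ i ∈ Finset.univ.filter (fun i : Fin d => (i : ℕ) < k), pstar g d i)
      = SA k / G := by
    intro k
    rw [hSA]; simp only [pstar, ← hGdef]
    rw [Finset.sum_div]
  -- equality of partial sums
  have hAeq : ∀ k, k ≤ d → A k = SA k / G := by
    intro k hk
    rcases Nat.eq_zero_or_pos k with rfl | hk1
    · have h1 : Finset.univ.filter (fun i : Fin d => (i : ℕ) < 0) = ∅ := by
        ext i; simp
      rw [hA, hSA]; simp only []; rw [h1]; simp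
    · have hm := hmaj.2 k hk1 (by simpa using hk)
      rw [sumKLargest_antitone f hdec hk, sumKLargest_antitone (pstar g d) hpa hk, hPp k] at hm
      exact le_antisymm hm (hAge k)
  -- conclude
  funext i
  have h1 : A ((i : ℕ) + 1) = SA ((i : ℕ) + 1) / G := hAeq _ i.isLt
  have h0 : A (i : ℕ) = SA (i : ℕ) / G := hAeq _ (le_of_lt i.isLt)
  have hstep : ∀ w : Fin d → ℝ,
      (∑ j ∈ Finset.univ.filter (fun j : Fin d => (j : ℕ) < (i : ℕ) + 1), w j)
      = (∑ j ∈ Finset.univ.filter (fun j : Fin d => (j : ℕ) < (i : ℕ)), w j) + w i := by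
    intro w
    have hins : Finset.univ.filter (fun j : Fin d => (j : ℕ) < (i : ℕ) + 1)
        = insert i (Finset.univ.filter (fun j : Fin d => (j : ℕ) < (i : ℕ))) := by
      ext j
      simp [Fin.ext_iff]
      omega
    rw [hins, Finset.sum_insert (by simp)]
    ring
  have hfA : A ((i : ℕ) + 1) = A (i : ℕ) + f i := hstep f
  have hgA : SA ((i : ℕ) + 1) = SA (i : ℕ) + g ^ (i : ℕ) := hstep (fun j => g ^ (j : ℕ))
  have : f i = g ^ (i : ℕ) / G := by
    have := h1
    rw [hfA, hgA, add_div] at this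
    linarith [h0]
  rw [this]
  rfl
end

section
/- Let a ≥ b > 0 with a + b ≤ 1 and g = b/a. If a probability vector p ∈ ℝ^d with decreasing entries is majorized by p*(g,d), then the iterates of the max-swap map converge to the geometric vector: lim_{n→∞} B^n(p) = p*(g,d). -/
open Filter Topology Kronecker Matrix
open scoped ComplexOrder

namespace MSAux

/-- partial sum of the first `k` entries -/
noncomputable def PS {d : ℕ} (v : Fin d → ℝ) (k : ℕ) : ℝ :=
  ∑ i : Fin d, if (i : ℕ) < k then v i else 0

lemma PS_zero {d : ℕ} (v : Fin d → ℝ) : PS v 0 = 0 := by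
  simp [PS]

lemma PS_succ {d : ℕ} (v : Fin d → ℝ) {k : ℕ} (hk : k < d) :
    PS v (k + 1) = PS v k + v ⟨k, hk⟩ := by
  have h : ∀ i : Fin d, (if (i : ℕ) < k + 1 then v i else 0)
      = (if (i : ℕ) < k then v i else 0) + (if i = (⟨k, hk⟩ : Fin d) then v i else 0) := by
    intro i
    by_cases h1 : (i : ℕ) < k
    · have hne : i ≠ (⟨k, hk⟩ : Fin d) := by
        intro h
        rw [h] at h1
        simp only [Fin.val_mk, lt_self_iff_false] at h1
      simp [h1, hne, Nat.lt_succ_of_lt h1]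
    · by_cases h2 : (i : ℕ) = k
      · have : i = (⟨k, hk⟩ : Fin d) := by
          apply Fin.ext; exact h2
        simp [this, h1]
      · have : i ≠ (⟨k, hk⟩ : Fin d) := by
          intro h; subst h; simp at h2
        have h3 : ¬ ((i:ℕ) < k + 1) := by omega
        simp [h1, h3, this]
  rw [PS]
  simp_rw [h]
  rw [Finset.sum_add_distrib, Finset.sum_ite_eq']
  simp [PS]

lemma PS_total {d : ℕ} (v : Fin d → ℝ) {k : ℕ} (hk : d ≤ k) :
    PS v k = ∑ i, v i := by
  apply Finset.sum_congr rfl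
  intro i _
  simp [lt_of_lt_of_le i.isLt hk]

lemma PS_le_total {d : ℕ} (v : Fin d → ℝ) (hv : ∀ i, 0 ≤ v i) (k : ℕ) :
    PS v k ≤ ∑ i, v i := by
  apply Finset.sum_le_sum
  intro i _
  by_cases h : (i:ℕ) < k <;> simp [h, hv i]

lemma PS_nonneg {d : ℕ} (v : Fin d → ℝ) (hv : ∀ i, 0 ≤ v i) (k : ℕ) : 0 ≤ PS v k := by
  apply Finset.sum_nonneg
  intro i _
  by_cases h : (i:ℕ) < k <;> simp [h, hv i]

/-- the prefix finset of size k -/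
noncomputable def pref (d k : ℕ) (hk : k ≤ d) : Finset (Fin d) :=
  (Finset.range k).attachFin (fun m hm => lt_of_lt_of_le (Finset.mem_range.mp hm) hk)

lemma mem_pref {d k : ℕ} (hk : k ≤ d) (i : Fin d) : i ∈ pref d k hk ↔ (i : ℕ) < k := by
  simp [pref, Finset.mem_attachFin]

lemma card_pref {d k : ℕ} (hk : k ≤ d) : (pref d k hk).card = k := by
  simp [pref, Finset.card_attachFin]

lemma sum_pref {d k : ℕ} (hk : k ≤ d) (v : Fin d → ℝ) :
    ∑ i ∈ pref d k hk, v i = PS v k := by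
  rw [PS, ← Finset.sum_filter]
  apply Finset.sum_congr _ (fun _ _ => rfl)
  ext i
  simp [mem_pref hk]

/-- k-subset sums of an antitone vector are at most the prefix sum -/
lemma sum_le_PS {d : ℕ} {v : Fin d → ℝ} (hv : Antitone v) :
    ∀ (k : ℕ) (s : Finset (Fin d)), s.card = k → ∑ i ∈ s, v i ≤ PS v k := by
  intro k
  induction k with
  | zero => intro s hs; rw [Finset.card_eq_zero.mp hs, PS_zero]; simp
  | succ k ih =>
    intro s hs
    have hne : s.Nonempty := by
      rw [← Finset.card_pos, hs]; omega
    set M := s.max' hne with hM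
    have hMmem : M ∈ s := s.max'_mem hne
    -- k ≤ M.val
    have hkM : k ≤ (M : ℕ) := by
      have hsub : s.image Fin.val ⊆ Finset.range ((M:ℕ)+1) := by
        intro m hm
        rcases Finset.mem_image.mp hm with ⟨i, hi, rfl⟩
        exact Finset.mem_range.mpr (Nat.lt_succ_of_le (s.le_max' i hi))
      have hcard : (s.image Fin.val).card = k + 1 := by
        rw [Finset.card_image_of_injective _ Fin.val_injective, hs]
      have := Finset.card_le_card hsub
      rw [hcard, Finset.card_range] at this
      omega
    have hkd : k < d := lt_of_le_of_lt hkM M.isLt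
    have herase : (s.erase M).card = k := by
      rw [Finset.card_erase_of_mem hMmem, hs]
      omega
    calc ∑ i ∈ s, v i = v M + ∑ i ∈ s.erase M, v i := (Finset.add_sum_erase s v hMmem).symm
      _ ≤ v ⟨k, hkd⟩ + PS v k := by
          gcongr
          · exact hv (by exact Fin.mk_le_of_le_val hkM)
          · exact ih _ herase
      _ = PS v (k+1) := by rw [PS_succ v hkd]; ring

/-- sortDesc as a permutation -/
lemma sortDesc_eq_comp {n : ℕ} (v : Fin n → ℝ) :
    ∀ i, sortDesc v i = v ((Fin.revPerm.trans (Tuple.sort v)) i) := fun _ => rfl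

lemma sortDesc_antitone {n : ℕ} (v : Fin n → ℝ) : Antitone (sortDesc v) := by
  intro i j hij
  have h := Tuple.monotone_sort v (Fin.rev_le_rev.mpr hij)
  exact h

lemma sortDesc_nonneg {n : ℕ} (v : Fin n → ℝ) (hv : ∀ i, 0 ≤ v i) (i : Fin n) :
    0 ≤ sortDesc v i := hv _

lemma sum_sortDesc {n : ℕ} (v : Fin n → ℝ) : ∑ i, sortDesc v i = ∑ i, v i := by
  exact Fintype.sum_equiv (Fin.revPerm.trans (Tuple.sort v)) _ v (fun i => rfl)

/-- upper bound: prefix sums of sortDesc are bounded by any uniform k-subset-sum bound -/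
lemma PS_sortDesc_le {d : ℕ} (v : Fin d → ℝ) {k : ℕ} (hk : k ≤ d) (C : ℝ)
    (hC : ∀ s : Finset (Fin d), s.card = k → ∑ i ∈ s, v i ≤ C) :
    PS (sortDesc v) k ≤ C := by
  rw [← sum_pref hk]
  set σ := Fin.revPerm.trans (Tuple.sort v) with hσ
  have : ∑ i ∈ pref d k hk, sortDesc v i = ∑ i ∈ (pref d k hk).map σ.toEmbedding, v i := by
    rw [Finset.sum_map]
    rfl
  rw [this]
  exact hC _ (by rw [Finset.card_map, card_pref])

/-- lower bound: any k-subset sum of v is at most the k-prefix of sortDesc v -/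
lemma sum_le_PS_sortDesc {d : ℕ} (v : Fin d → ℝ) (s : Finset (Fin d)) :
    ∑ i ∈ s, v i ≤ PS (sortDesc v) s.card := by
  set σ := Fin.revPerm.trans (Tuple.sort v) with hσ
  have h1 : ∑ i ∈ s, v i = ∑ i ∈ s.map σ.symm.toEmbedding, sortDesc v i := by
    rw [Finset.sum_map]
    apply Finset.sum_congr rfl
    intro i _
    rw [sortDesc_eq_comp]
    exact congrArg v (σ.apply_symm_apply i).symm
  rw [h1]
  exact sum_le_PS (sortDesc_antitone v) _ _ (by rw [Finset.card_map])


section Facts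

variable {d : ℕ} (a b : ℝ)

lemma Zpos (hd : 2 ≤ d) (ha : 0 < a) (hb : 0 < b) :
    0 < ∑ j : Fin d, (b/a) ^ (j : ℕ) := by
  apply Finset.sum_pos
  · intro i _
    exact pow_pos (div_pos hb ha) _
  · exact ⟨⟨0, by omega⟩, Finset.mem_univ _⟩

lemma pstar_nonneg (hd : 2 ≤ d) (ha : 0 < a) (hb : 0 < b) (i : Fin d) :
    0 ≤ pstar (b/a) d i :=
  div_nonneg (pow_nonneg (div_pos hb ha).le _) (Zpos a b hd ha hb).le

lemma pstar_sum (hd : 2 ≤ d) (ha : 0 < a) (hb : 0 < b) :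
    ∑ i, pstar (b/a) d i = 1 := by
  unfold pstar
  rw [← Finset.sum_div]
  exact div_self (ne_of_gt (Zpos a b hd ha hb))

lemma pstar_antitone (hd : 2 ≤ d) (ha : 0 < a) (hb : 0 < b) (hba : b ≤ a) :
    Antitone (pstar (b/a) d) := by
  intro i j hij
  unfold pstar
  apply (div_le_div_iff_of_pos_right (Zpos a b hd ha hb)).mpr
  apply pow_le_pow_of_le_one (div_pos hb ha).le _ hij
  exact div_le_one_of_le₀ hba ha.le

lemma pstar_succ (hd : 2 ≤ d) (ha : 0 < a) (hb : 0 < b) {m : ℕ} (h : m + 1 < d) :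
    a * pstar (b/a) d ⟨m+1, h⟩ = b * pstar (b/a) d ⟨m, by omega⟩ := by
  unfold pstar
  simp only [Fin.val_mk]
  rw [← mul_div_assoc, ← mul_div_assoc]
  congr 1
  rw [pow_succ]
  field_simp

end Facts

section Ineqs

variable {d : ℕ} {a b : ℝ} {p : Fin d → ℝ}

/-- the base inequality: `δ ≤ gap (m+1)` -/
lemma base_ineq (hd : 2 ≤ d) (ha : 0 < a) (hb : 0 < b) (hba : b ≤ a) (hab : a + b ≤ 1)
    (hgap : ∀ k, PS p k ≤ PS (pstar (b/a) d) k) {m : ℕ} (hm1 : m + 1 < d) :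
    a * p ⟨m+1, hm1⟩ - b * p ⟨m, by omega⟩ ≤
      PS (pstar (b/a) d) (m+1) - PS p (m+1) := by
  set ps := pstar (b/a) d with hps
  have hid : a * ps ⟨m+1, hm1⟩ = b * ps ⟨m, by omega⟩ := pstar_succ a b hd ha hb hm1
  have E1 : PS p (m+1) = PS p m + p ⟨m, by omega⟩ := PS_succ p (by omega)
  have E2 : PS p (m+2) = PS p (m+1) + p ⟨m+1, hm1⟩ := PS_succ p hm1
  have E3 : PS ps (m+1) = PS ps m + ps ⟨m, by omega⟩ := PS_succ ps (by omega)
  have E4 : PS ps (m+2) = PS ps (m+1) + ps ⟨m+1, hm1⟩ := PS_succ ps hm1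
  have g1 := hgap m
  have g2 := hgap (m+1)
  have g3 := hgap (m+2)
  have h1 : 0 ≤ (1 - a - b) * (PS ps (m+1) - PS p (m+1)) :=
    mul_nonneg (by linarith) (by linarith)
  have h2 : 0 ≤ a * ((PS ps (m+1) + ps ⟨m+1, hm1⟩) - (PS p (m+1) + p ⟨m+1, hm1⟩)) :=
    mul_nonneg ha.le (by linarith)
  have h3 : 0 ≤ b * ((PS ps (m+1) - ps ⟨m, by omega⟩) - (PS p (m+1) - p ⟨m, by omega⟩)) :=
    mul_nonneg hb.le (by linarith)
  nlinarith [h1, h2, h3, hid]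

/-- the G inequality, for `1 ≤ k ≤ m+1` -/
lemma G_ineq (hd : 2 ≤ d) (ha : 0 < a) (hb : 0 < b) (hba : b ≤ a) (hab : a + b ≤ 1)
    (hanti : Antitone p)
    (hgap : ∀ k, PS p k ≤ PS (pstar (b/a) d) k) {m : ℕ} (hm1 : m + 1 < d) :
    ∀ k, 1 ≤ k → k ≤ m + 1 →
      PS p (k-1) + p ⟨m, by omega⟩ + (a * p ⟨m+1, hm1⟩ - b * p ⟨m, by omega⟩)
        ≤ PS (pstar (b/a) d) k := by
  set ps := pstar (b/a) d with hps
  set δ := a * p ⟨m+1, hm1⟩ - b * p ⟨m, by omega⟩ with hδ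
  suffices H : ∀ t k, k + t = m + 1 → 1 ≤ k →
      PS p (k-1) + p ⟨m, by omega⟩ + δ ≤ PS ps k by
    intro k hk1 hk2
    exact H (m + 1 - k) k (by omega) hk1
  intro t
  induction t with
  | zero =>
    intro k hk hk1
    have hkm : k = m + 1 := by omega
    subst hkm
    have E1 : PS p (m+1) = PS p m + p ⟨m, by omega⟩ := PS_succ p (by omega)
    have hb1 := base_ineq hd ha hb hba hab hgap hm1
    have : m + 1 - 1 = m := by omega
    rw [this]
    linarith
  | succ t ih =>
    intro k hk hk1
    obtain ⟨j, rfl⟩ : ∃ j, k = j + 1 := ⟨k - 1, by omega⟩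
    have hjm : j + 1 ≤ m := by omega
    have hjd : j + 1 < d := by omega
    have IH := ih (j + 2) (by omega) (by omega)
    have hred : j + 2 - 1 = j + 1 := by omega
    rw [hred] at IH
    have hred2 : j + 1 - 1 = j := by omega
    rw [hred2]
    have Ep : PS p (j+1) = PS p j + p ⟨j, by omega⟩ := PS_succ p (by omega)
    have Eps1 : PS ps (j+1) = PS ps j + ps ⟨j, by omega⟩ := PS_succ ps (by omega)
    have Eps2 : PS ps (j+2) = PS ps (j+1) + ps ⟨j+1, hjd⟩ := PS_succ ps hjd
    by_cases hc : ps ⟨j+1, hjd⟩ ≤ p ⟨j, by omega⟩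
    · linarith
    · push_neg at hc
      have hid : a * ps ⟨j+1, hjd⟩ = b * ps ⟨j, by omega⟩ := pstar_succ a b hd ha hb hjd
      have hpsnn : 0 ≤ ps ⟨j, by omega⟩ := pstar_nonneg a b hd ha hb _
      have h4 : (1 + a - b) * ps ⟨j+1, hjd⟩ ≤ ps ⟨j, by omega⟩ := by
        have key : a * ((1 + a - b) * ps ⟨j+1, hjd⟩) ≤ a * ps ⟨j, by omega⟩ := by
          nlinarith [hid, mul_nonneg (mul_nonneg (sub_nonneg.mpr hba)
            (show (0:ℝ) ≤ 1 - b by linarith)) hpsnn]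
        exact le_of_mul_le_mul_left key ha
      have hm0 : p ⟨m, by omega⟩ ≤ p ⟨j, by omega⟩ := hanti (by
        show (⟨j, by omega⟩ : Fin d) ≤ ⟨m, by omega⟩
        exact Fin.mk_le_mk.mpr (by omega))
      have hm2 : p ⟨m+1, hm1⟩ ≤ p ⟨m, by omega⟩ := hanti (by
        show (⟨m, by omega⟩ : Fin d) ≤ ⟨m+1, hm1⟩
        exact Fin.mk_le_mk.mpr (by omega))
      have hδb : δ ≤ (a - b) * p ⟨m+1, hm1⟩ := by
        have : b * p ⟨m+1, hm1⟩ ≤ b * p ⟨m, by omega⟩ := mul_le_mul_of_nonneg_left hm2 hb.le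
        rw [hδ]; linarith
      have hab2 : (a - b) * p ⟨m+1, hm1⟩ ≤ (a - b) * ps ⟨j+1, hjd⟩ :=
        mul_le_mul_of_nonneg_left (by linarith) (sub_nonneg.mpr hba)
      have hgj := hgap j
      linarith

/-- the B inequality, for `m+1 ≤ k ≤ d-1` -/
lemma B_ineq (hd : 2 ≤ d) (ha : 0 < a) (hb : 0 < b) (hba : b ≤ a) (hab : a + b ≤ 1)
    (hnn : ∀ i, 0 ≤ p i) (hanti : Antitone p)
    (hgap : ∀ k, PS p k ≤ PS (pstar (b/a) d) k) {m : ℕ} (hm1 : m + 1 < d) :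
    ∀ k, m + 1 ≤ k → k + 1 ≤ d → (hkd : k < d) →
      (a * p ⟨m+1, hm1⟩ - b * p ⟨m, by omega⟩) + p ⟨k, hkd⟩ + PS p k
        ≤ PS (pstar (b/a) d) k + p ⟨m+1, hm1⟩ := by
  set ps := pstar (b/a) d with hps
  set δ := a * p ⟨m+1, hm1⟩ - b * p ⟨m, by omega⟩ with hδ
  have hδb : δ ≤ (a - b) * p ⟨m+1, hm1⟩ := by
    have hm2 : p ⟨m+1, hm1⟩ ≤ p ⟨m, by omega⟩ := hanti (by
      show (⟨m, by omega⟩ : Fin d) ≤ ⟨m+1, hm1⟩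
      exact Fin.mk_le_mk.mpr (by omega))
    have : b * p ⟨m+1, hm1⟩ ≤ b * p ⟨m, by omega⟩ := mul_le_mul_of_nonneg_left hm2 hb.le
    rw [hδ]; linarith
  intro k hk
  induction k, hk using Nat.le_induction with
  | base =>
    intro _ hkd
    have hb1 := base_ineq hd ha hb hba hab hgap hm1
    linarith
  | succ k hk ih =>
    intro hk2 hkd
    have hkd0 : k < d := by omega
    have IH := ih (by omega) hkd0
    have Ep : PS p (k+1) = PS p k + p ⟨k, hkd0⟩ := PS_succ p hkd0
    have Eps : PS ps (k+1) = PS ps k + ps ⟨k, hkd0⟩ := PS_succ ps hkd0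
    have Ep2 : PS p (k+2) = PS p (k+1) + p ⟨k+1, hkd⟩ := PS_succ p hkd
    have Eps2 : PS ps (k+2) = PS ps (k+1) + ps ⟨k+1, hkd⟩ := PS_succ ps hkd
    have gstar := hgap (k+2)
    by_cases hc : p ⟨k+1, hkd⟩ ≤ ps ⟨k, hkd0⟩
    · linarith
    · push_neg at hc
      have hid : a * ps ⟨k+1, hkd⟩ = b * ps ⟨k, hkd0⟩ := pstar_succ a b hd ha hb hkd
      have hchain : p ⟨k+1, hkd⟩ ≤ p ⟨m+1, hm1⟩ := hanti (by
        show (⟨m+1, hm1⟩ : Fin d) ≤ ⟨k+1, hkd⟩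
        exact Fin.mk_le_mk.mpr (by omega))
      have hpnn : 0 ≤ p ⟨m+1, hm1⟩ := hnn _
      have key : a * ps ⟨k+1, hkd⟩ ≤ a * ((1 - a + b) * p ⟨m+1, hm1⟩) := by
        have s1 : b * ps ⟨k, hkd0⟩ ≤ b * p ⟨k+1, hkd⟩ := mul_le_mul_of_nonneg_left hc.le hb.le
        have s2 : b * p ⟨k+1, hkd⟩ ≤ b * p ⟨m+1, hm1⟩ := mul_le_mul_of_nonneg_left hchain hb.le
        nlinarith [mul_nonneg (mul_nonneg (show (0:ℝ) ≤ 1 - a by linarith)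
          (sub_nonneg.mpr hba)) hpnn]
      have hps1 : ps ⟨k+1, hkd⟩ ≤ (1 - a + b) * p ⟨m+1, hm1⟩ := le_of_mul_le_mul_left key ha
      -- δ ≤ p⟨m+1⟩ - ps⟨k+1⟩, and gap relation (*)
      linarith

end Ineqs

noncomputable def vOf (a b : ℝ) {d : ℕ} (p : Fin d → ℝ) (K : Fin d) : Fin d → ℝ :=
  fun i => if i = K then p K - delta a b p K
    else if (i : ℕ) = (K : ℕ) - 1 then p i + delta a b p K else p i

section SwapMain

variable {d : ℕ} {a b : ℝ} {p : Fin d → ℝ}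


theorem swap_sortDesc (hd : 2 ≤ d) (ha : 0 < a) (hb : 0 < b) (hba : b ≤ a) (hab : a + b ≤ 1)
    (hnn : ∀ i, 0 ≤ p i) (hsum : ∑ i, p i = 1) (hanti : Antitone p)
    (hgap : ∀ k, PS p k ≤ PS (pstar (b/a) d) k)
    (K : Fin d) (hK : 0 < delta a b p K) :
    (∀ i, 0 ≤ sortDesc (vOf a b p K) i) ∧ (∑ i, sortDesc (vOf a b p K) i = 1) ∧
    Antitone (sortDesc (vOf a b p K)) ∧
    (∀ k, PS (sortDesc (vOf a b p K)) k ≤ PS (pstar (b/a) d) k) ∧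
    (∀ k, PS p k ≤ PS (sortDesc (vOf a b p K)) k) ∧
    (PS p (K:ℕ) + delta a b p K ≤ PS (sortDesc (vOf a b p K)) (K:ℕ)) := by
  set ps := pstar (b/a) d with hps
  have hK0 : (K : ℕ) ≠ 0 := by
    intro h0
    unfold delta at hK
    rw [if_pos h0] at hK
    exact lt_irrefl 0 hK
  set m : ℕ := (K : ℕ) - 1 with hmdef
  have hKm : (K : ℕ) = m + 1 := by omega
  have hm1 : m + 1 < d := by omega
  have hKeq : K = ⟨m+1, hm1⟩ := Fin.ext (by simp only [Fin.val_mk]; omega)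
  set K' : Fin d := ⟨m, by omega⟩ with hK'def
  have hK'K : K' ≠ K := by
    intro h
    have h2 := congrArg Fin.val h
    simp only [hK'def, Fin.val_mk] at h2
    omega
  set δ := delta a b p K with hδdef
  have hδ : δ = a * p ⟨m+1, hm1⟩ - b * p ⟨m, by omega⟩ := by
    rw [hδdef]
    unfold delta
    rw [if_neg hK0]
    have e1 : p K = p ⟨m+1, hm1⟩ := congrArg p hKeq
    have e2 : p ⟨(K:ℕ)-1, Nat.lt_of_le_of_lt (Nat.sub_le _ _) K.isLt⟩ = p ⟨m, by omega⟩ :=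
      congrArg p (Fin.ext (by simp only [Fin.val_mk]; omega))
    rw [e1, e2]
  have hpK : p K = p ⟨m+1, hm1⟩ := congrArg p hKeq
  have hpK' : p K' = p ⟨m, by omega⟩ := rfl
  set v := vOf a b p K with hvdef
  -- pointwise description of v
  have hveq : ∀ i, v i = p i + (if i = K' then δ else 0) - (if i = K then δ else 0) := by
    intro i
    rw [hvdef]
    unfold vOf
    by_cases hiK : i = K
    · rw [if_pos hiK, if_neg (by rw [hiK]; exact fun h => hK'K h.symm), if_pos hiK, hiK]
      ring
    · rw [if_neg hiK, if_neg hiK]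
      by_cases hiK' : i = K'
      · have : (i : ℕ) = (K : ℕ) - 1 := by rw [hiK']
        rw [if_pos this, if_pos hiK']
        ring
      · have : (i : ℕ) ≠ (K : ℕ) - 1 := by
          intro h
          exact hiK' (Fin.ext (by simp only [hK'def, Fin.val_mk]; omega))
        rw [if_neg this, if_neg hiK']
        ring
  -- sums of v over finsets
  have hvsum : ∀ s : Finset (Fin d), ∑ i ∈ s, v i
      = ∑ i ∈ s, p i + (if K' ∈ s then δ else 0) - (if K ∈ s then δ else 0) := by
    intro s
    simp_rw [hveq]
    rw [Finset.sum_sub_distrib, Finset.sum_add_distrib]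
    congr 1
    · congr 1
      exact Finset.sum_ite_eq' s K' (fun _ => δ)
    · exact Finset.sum_ite_eq' s K (fun _ => δ)
  -- the crucial subset bound
  have hsub : ∀ s : Finset (Fin d), ∑ i ∈ s, v i ≤ PS ps s.card := by
    intro s
    rw [hvsum s]
    have hsp : ∑ i ∈ s, p i ≤ PS p s.card := sum_le_PS hanti _ _ rfl
    by_cases hK's : K' ∈ s
    · by_cases hKs : K ∈ s
      · rw [if_pos hK's, if_pos hKs]
        have := hgap s.card
        linarith
      · rw [if_pos hK's, if_neg hKs]
        have hcard1 : 1 ≤ s.card := Finset.card_pos.mpr ⟨K', hK's⟩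
        have herase : ∑ i ∈ s, p i = p K' + ∑ i ∈ s.erase K', p i :=
          (Finset.add_sum_erase _ _ hK's).symm
        by_cases hsc : s.card ≤ m + 1
        · have h1 : ∑ i ∈ s.erase K', p i ≤ PS p (s.card - 1) :=
            sum_le_PS hanti _ _ (by rw [Finset.card_erase_of_mem hK's])
          have h2 := G_ineq hd ha hb hba hab hanti hgap hm1 s.card hcard1 hsc
          rw [← hδ] at h2
          rw [← hpK'] at h2
          linarith
        · push_neg at hsc
          have hsd : s.card + 1 ≤ d := by
            have hsub2 : s ⊆ Finset.univ.erase K := by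
              intro i hi
              exact Finset.mem_erase.mpr ⟨fun h => hKs (h ▸ hi), Finset.mem_univ i⟩
            have := Finset.card_le_card hsub2
            rw [Finset.card_erase_of_mem (Finset.mem_univ K), Finset.card_univ,
              Fintype.card_fin] at this
            omega
          have hkd : s.card < d := by omega
          have h1 : p K + ∑ i ∈ s, p i ≤ PS p (s.card + 1) := by
            rw [← Finset.sum_insert hKs]
            exact sum_le_PS hanti _ _ (Finset.card_insert_of_notMem hKs)
          have h2 := B_ineq hd ha hb hba hab hnn hanti hgap hm1 s.card (by omega) hsd hkd
          rw [← hδ, ← hpK] at h2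
          have Ep : PS p (s.card+1) = PS p s.card + p ⟨s.card, hkd⟩ := PS_succ p hkd
          linarith
    · rw [if_neg hK's]
      have : (0:ℝ) ≤ (if K ∈ s then δ else 0) := by
        split
        · exact hK.le
        · exact le_refl _
      have := hgap s.card
      linarith
  -- nonnegativity of v
  have hvnn : ∀ i, 0 ≤ v i := by
    intro i
    rw [hveq i]
    by_cases hiK : i = K
    · rw [if_neg (by rw [hiK]; exact fun h => hK'K h.symm), if_pos hiK]
      have h1 : 0 ≤ (1 - a) * p ⟨m+1, hm1⟩ := mul_nonneg (by linarith) (hnn _)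
      have h2 : 0 ≤ b * p ⟨m, by omega⟩ := mul_nonneg hb.le (hnn _)
      rw [hiK, hpK, hδ]
      linarith
    · rw [if_neg hiK]
      by_cases hiK' : i = K'
      · rw [if_pos hiK']
        have := hnn i
        linarith
      · rw [if_neg hiK']
        have := hnn i
        linarith
  -- total sum of v
  have hvtot : ∑ i, v i = 1 := by
    have := hvsum Finset.univ
    rw [if_pos (Finset.mem_univ K'), if_pos (Finset.mem_univ K)] at this
    rw [this, hsum]
    ring
  have hpstot : ∑ i, ps i = 1 := pstar_sum a b hd ha hb
  refine ⟨fun i => hvnn _, ?_, sortDesc_antitone v, ?_, ?_, ?_⟩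
  · rw [sum_sortDesc]; exact hvtot
  · -- gap preservation
    intro k
    by_cases hk : k ≤ d
    · exact PS_sortDesc_le v hk _ (fun s hs => by rw [← hs]; exact hsub s)
    · push_neg at hk
      rw [PS_total (sortDesc v) (by omega), PS_total ps (by omega), sum_sortDesc, hvtot, hpstot]
  · -- monotonicity of partial sums
    intro k
    by_cases hk : k ≤ d
    · have h1 := sum_le_PS_sortDesc v (pref d k hk)
      rw [card_pref hk, sum_pref hk] at h1
      have h2 := hvsum (pref d k hk)
      rw [sum_pref hk, sum_pref hk] at h2
      have hKK'le : K ∈ pref d k hk → K' ∈ pref d k hk := by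
        intro hKin
        rw [mem_pref hk] at hKin ⊢
        simp only [hK'def, Fin.val_mk]
        omega
      by_cases c1 : K ∈ pref d k hk
      · rw [if_pos c1, if_pos (hKK'le c1)] at h2
        linarith
      · rw [if_neg c1] at h2
        by_cases c2 : K' ∈ pref d k hk
        · rw [if_pos c2] at h2
          linarith
        · rw [if_neg c2] at h2
          linarith
    · push_neg at hk
      rw [PS_total (sortDesc v) (by omega), PS_total p (by omega), sum_sortDesc, hvtot, hsum]
  · -- strict gain at K
    have hkK : (K:ℕ) ≤ d := K.isLt.le
    have h1 := sum_le_PS_sortDesc v (pref d (K:ℕ) hkK)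
    rw [card_pref hkK, sum_pref hkK] at h1
    have h2 := hvsum (pref d (K:ℕ) hkK)
    rw [sum_pref hkK, sum_pref hkK] at h2
    rw [if_pos (by rw [mem_pref hkK]; simp only [hK'def, Fin.val_mk]; omega),
      if_neg (by rw [mem_pref hkK]; omega)] at h2
    linarith

end SwapMain

lemma sumKLargest_eq_PS {d : ℕ} {v : Fin d → ℝ} (hv : Antitone v) {k : ℕ} (hk : k ≤ d) :
    sumKLargest v k = PS v k := by
  apply IsGreatest.csSup_eq
  constructor
  · exact ⟨pref d k hk, card_pref hk, sum_pref hk v⟩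
  · rintro x ⟨s, hs, rfl⟩
    exact sum_le_PS hv _ s hs

section Iter

variable {d : ℕ} {a b : ℝ}

/-- the invariant -/
def Good (a b : ℝ) {d : ℕ} (p : Fin d → ℝ) : Prop :=
  (∀ i, 0 ≤ p i) ∧ (∑ i, p i = 1) ∧ Antitone p ∧
    ∀ k, PS p k ≤ PS (pstar (b/a) d) k

lemma maxSwap_active {p : Fin d → ℝ}
    (h : ∃ k : Fin d, 0 < delta a b p k ∧ ∀ i, delta a b p i ≤ delta a b p k) :
    maxSwap a b p = sortDesc (vOf a b p h.choose) := by
  unfold maxSwap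
  rw [dif_pos h]
  rfl

lemma maxSwap_inactive {p : Fin d → ℝ}
    (h : ¬ ∃ k : Fin d, 0 < delta a b p k ∧ ∀ i, delta a b p i ≤ delta a b p k) :
    maxSwap a b p = p := by
  unfold maxSwap
  rw [dif_neg h]

lemma maxSwap_spec (hd : 2 ≤ d) (ha : 0 < a) (hb : 0 < b) (hba : b ≤ a) (hab : a + b ≤ 1)
    {p : Fin d → ℝ} (hG : Good a b p) :
    Good a b (maxSwap a b p) ∧ (∀ k, PS p k ≤ PS (maxSwap a b p) k) ∧
    (∀ h : (∃ k : Fin d, 0 < delta a b p k ∧ ∀ i, delta a b p i ≤ delta a b p k),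
      PS p ((h.choose : Fin d) : ℕ) + delta a b p h.choose
        ≤ PS (maxSwap a b p) ((h.choose : Fin d) : ℕ)) := by
  obtain ⟨h1, h2, h3, h4⟩ := hG
  by_cases hex : ∃ k : Fin d, 0 < delta a b p k ∧ ∀ i, delta a b p i ≤ delta a b p k
  · rw [maxSwap_active hex]
    obtain ⟨c1, c2, c3, c4, c5, c6⟩ :=
      swap_sortDesc hd ha hb hba hab h1 h2 h3 h4 hex.choose hex.choose_spec.1
    exact ⟨⟨c1, c2, c3, c4⟩, c5, fun _ => c6⟩
  · rw [maxSwap_inactive hex]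
    exact ⟨⟨h1, h2, h3, h4⟩, fun k => le_refl _, fun h => absurd h hex⟩

end Iter
end MSAux

open MSAux in
theorem maxSwap_converges {d : ℕ} (hd : 2 ≤ d)
    (a b : ℝ) (hb : 0 < b) (hba : b ≤ a) (hab : a + b ≤ 1)
    (p : Fin d → ℝ) (hGp : Good a b p) :
    Filter.Tendsto (fun n : ℕ => (maxSwap a b)^[n] p) Filter.atTop
      (nhds (pstar (b / a) d)) := by
  have ha : 0 < a := lt_of_lt_of_le hb hba
  set ps := pstar (b/a) d with hps
  set P : ℕ → Fin d → ℝ := fun n => (maxSwap a b)^[n] p with hP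
  have hPsucc : ∀ n, P (n+1) = maxSwap a b (P n) := by
    intro n
    rw [hP]
    exact Function.iterate_succ_apply' _ _ _
  have hGood : ∀ n, Good a b (P n) := by
    intro n
    induction n with
    | zero => exact hGp
    | succ n ih => rw [hPsucc]; exact (maxSwap_spec hd ha hb hba hab ih).1
  have hstep : ∀ n k, PS (P n) k ≤ PS (P (n+1)) k := by
    intro n k
    rw [hPsucc]
    exact (maxSwap_spec hd ha hb hba hab (hGood n)).2.1 k
  have hub : ∀ n k, PS (P n) k ≤ 1 := by
    intro n k
    calc PS (P n) k ≤ PS ps k := (hGood n).2.2.2 k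
      _ ≤ ∑ i, ps i := PS_le_total ps (pstar_nonneg a b hd ha hb) k
      _ = 1 := pstar_sum a b hd ha hb
  have hmono : ∀ k, Monotone (fun n => PS (P n) k) :=
    fun k => monotone_nat_of_le_succ (fun n => hstep n k)
  set L : ℕ → ℝ := fun k => ⨆ n, PS (P n) k with hL
  have hLt : ∀ k, Filter.Tendsto (fun n => PS (P n) k) Filter.atTop (nhds (L k)) := by
    intro k
    apply tendsto_atTop_ciSup (hmono k)
    refine ⟨1, ?_⟩
    rintro x ⟨n, rfl⟩
    exact hub n k
  set q : Fin d → ℝ := fun i => L ((i:ℕ)+1) - L (i:ℕ) with hq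
  have hPS_at : ∀ (v : Fin d → ℝ) (i : Fin d), v i = PS v ((i:ℕ)+1) - PS v (i:ℕ) := by
    intro v i
    rw [PS_succ v i.isLt]
    have : (⟨(i:ℕ), i.isLt⟩ : Fin d) = i := Fin.ext rfl
    rw [this]
    ring
  have hqt : ∀ i : Fin d, Filter.Tendsto (fun n => P n i) Filter.atTop (nhds (q i)) := by
    intro i
    have : (fun n => P n i) = fun n => PS (P n) ((i:ℕ)+1) - PS (P n) (i:ℕ) := by
      funext n
      exact hPS_at (P n) i
    rw [this, hq]
    exact (hLt _).sub (hLt _)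
  -- limit facts
  have hq_nonneg : ∀ i, 0 ≤ q i := by
    intro i
    exact ge_of_tendsto (hqt i) (Filter.Eventually.of_forall (fun n => (hGood n).1 i))
  have hq_anti : Antitone q := by
    intro i j hij
    exact le_of_tendsto_of_tendsto' (hqt j) (hqt i) (fun n => (hGood n).2.2.1 hij)
  have hq_sum : ∑ i, q i = 1 := by
    have h1 : Filter.Tendsto (fun n => ∑ i, P n i) Filter.atTop (nhds (∑ i, q i)) :=
      tendsto_finset_sum _ (fun i _ => hqt i)
    have h2 : (fun n => ∑ i, P n i) = fun _ => (1:ℝ) := funext (fun n => (hGood n).2.1)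
    rw [h2] at h1
    exact (tendsto_nhds_unique tendsto_const_nhds h1).symm
  have hd0 : 0 < d := by omega
  set i0 : Fin d := ⟨0, hd0⟩ with hi0
  have hq0 : q i0 ≤ ps i0 := by
    apply le_of_tendsto (hqt i0)
    apply Filter.Eventually.of_forall
    intro n
    rw [hPS_at (P n) i0, hPS_at ps i0]
    have e1 := (hGood n).2.2.2 1
    have e2 := (hGood n).2.2.2 0
    simp only [hi0, Fin.val_mk] at *
    rw [PS_zero, PS_zero]
    linarith
  -- all deltas of the limit are nonpositive
  have hq_delta : ∀ i : Fin d, delta a b q i ≤ 0 := by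
    by_contra hcon
    push_neg at hcon
    obtain ⟨i, hipos⟩ := hcon
    have hi0' : (i : ℕ) ≠ 0 := by
      intro h0
      unfold delta at hipos
      rw [if_pos h0] at hipos
      exact lt_irrefl 0 hipos
    set i' : Fin d := ⟨(i:ℕ)-1, Nat.lt_of_le_of_lt (Nat.sub_le _ _) i.isLt⟩ with hi'
    have hdq : delta a b q i = a * q i - b * q i' := by
      unfold delta
      rw [if_neg hi0']
    have hdn : ∀ n, delta a b (P n) i = a * P n i - b * P n i' := by
      intro n
      unfold delta
      rw [if_neg hi0']
    set ε := delta a b q i with hε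
    have hconv : Filter.Tendsto (fun n => delta a b (P n) i) Filter.atTop (nhds ε) := by
      have hrw : (fun n => delta a b (P n) i) = fun n => a * P n i - b * P n i' :=
        funext hdn
      rw [hrw, hdq]
      exact ((hqt i).const_mul a).sub ((hqt i').const_mul b)
    have hev : ∀ᶠ n in Filter.atTop, ε/2 ≤ delta a b (P n) i :=
      hconv.eventually (eventually_ge_nhds (by linarith))
    obtain ⟨N, hN⟩ := Filter.eventually_atTop.mp hev
    -- the Lyapunov functional
    set Φ : ℕ → ℝ := fun n => ∑ k ∈ Finset.range (d+1), PS (P n) k with hΦ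
    have hΦub : ∀ n, Φ n ≤ d + 1 := by
      intro n
      calc Φ n ≤ ∑ _k ∈ Finset.range (d+1), (1:ℝ) :=
            Finset.sum_le_sum (fun k _ => hub n k)
        _ = d + 1 := by simp
    have hΦstep : ∀ n, N ≤ n → Φ n + ε/2 ≤ Φ (n+1) := by
      intro n hn
      have hdni : ε/2 ≤ delta a b (P n) i := hN n hn
      have hex : ∃ k : Fin d, 0 < delta a b (P n) k ∧
          ∀ j, delta a b (P n) j ≤ delta a b (P n) k := by
        obtain ⟨x, _, hx⟩ := Finset.exists_max_image Finset.univ (delta a b (P n))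
          ⟨i, Finset.mem_univ i⟩
        refine ⟨x, ?_, fun j => hx j (Finset.mem_univ j)⟩
        calc (0:ℝ) < ε/2 := by linarith
          _ ≤ delta a b (P n) i := hdni
          _ ≤ delta a b (P n) x := hx i (Finset.mem_univ i)
      have hgain := (maxSwap_spec hd ha hb hba hab (hGood n)).2.2 hex
      rw [← hPsucc n] at hgain
      have hδK : ε/2 ≤ delta a b (P n) hex.choose :=
        le_trans hdni (hex.choose_spec.2 i)
      have hterm : ∀ k ∈ Finset.range (d+1),
          PS (P n) k + (if k = ((hex.choose : Fin d) : ℕ) then ε/2 else 0)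
            ≤ PS (P (n+1)) k := by
        intro k _
        split
        · next hkK =>
            subst hkK
            linarith
        · simpa using hstep n k
      have hmem : ((hex.choose : Fin d) : ℕ) ∈ Finset.range (d+1) :=
        Finset.mem_range.mpr (by have := (hex.choose : Fin d).isLt; omega)
      calc Φ n + ε/2
          = ∑ k ∈ Finset.range (d+1),
              (PS (P n) k + (if k = ((hex.choose : Fin d) : ℕ) then ε/2 else 0)) := by
            rw [Finset.sum_add_distrib, Finset.sum_ite_eq' _ _ (fun _ => ε/2), if_pos hmem]
        _ ≤ ∑ k ∈ Finset.range (d+1), PS (P (n+1)) k := Finset.sum_le_sum hterm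
        _ = Φ (n+1) := rfl
    have hΦlin : ∀ j : ℕ, Φ N + j * (ε/2) ≤ Φ (N + j) := by
      intro j
      induction j with
      | zero => simp
      | succ j ih =>
        have := hΦstep (N + j) (by omega)
        have harith : (N + (j+1)) = (N + j) + 1 := by omega
        rw [harith]
        push_cast
        linarith
    have hεpos : 0 < ε/2 := by linarith
    obtain ⟨j, hj⟩ := exists_nat_gt ((d + 1 - Φ N)/(ε/2))
    have hj2 : d + 1 - Φ N < j * (ε/2) := by
      rw [div_lt_iff₀ hεpos] at hj
      linarith
    have := hΦlin j
    have := hΦub (N + j)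
    linarith
  -- identification of the limit with pstar
  have hZ := Zpos a b hd ha hb
  have hps_at : ∀ i : Fin d, ps i = (b/a)^(i:ℕ) / (∑ j : Fin d, (b/a) ^ (j : ℕ)) :=
    fun i => rfl
  have hqle : ∀ m, (hm : m < d) → q ⟨m, hm⟩ ≤ (b/a)^m * q i0 := by
    intro m
    induction m with
    | zero =>
      intro hm
      have : (⟨0, hm⟩ : Fin d) = i0 := Fin.ext rfl
      rw [this, pow_zero, one_mul]
    | succ m ih =>
      intro hm
      have hmd : m < d := by omega
      have hdel := hq_delta ⟨m+1, hm⟩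
      unfold delta at hdel
      rw [if_neg (by simp)] at hdel
      have hidx : (⟨((⟨m+1, hm⟩ : Fin d) : ℕ) - 1,
          Nat.lt_of_le_of_lt (Nat.sub_le _ _) (⟨m+1, hm⟩ : Fin d).isLt⟩ : Fin d)
          = ⟨m, hmd⟩ := Fin.ext (by simp)
      rw [hidx] at hdel
      have h2 : b * q ⟨m, hmd⟩ ≤ b * ((b/a)^m * q i0) :=
        mul_le_mul_of_nonneg_left (ih hmd) hb.le
      apply le_of_mul_le_mul_left _ ha
      have hre : a * ((b/a)^(m+1) * q i0) = b * ((b/a)^m * q i0) := by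
        rw [pow_succ]
        field_simp
      rw [hre]
      calc a * q ⟨m+1, hm⟩ ≤ b * q ⟨m, hmd⟩ := by linarith
        _ ≤ b * ((b/a)^m * q i0) := h2
  have hqle' : ∀ i : Fin d, q i ≤ (b/a)^(i:ℕ) * q i0 := by
    intro i
    have := hqle (i:ℕ) i.isLt
    have hei : (⟨(i:ℕ), i.isLt⟩ : Fin d) = i := Fin.ext rfl
    rwa [hei] at this
  have hsum1 : (1:ℝ) ≤ (∑ j : Fin d, (b/a) ^ (j : ℕ)) * q i0 := by
    have h1 : ∑ i : Fin d, q i ≤ ∑ i : Fin d, (b/a)^(i:ℕ) * q i0 :=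
      Finset.sum_le_sum (fun i _ => hqle' i)
    rw [hq_sum, ← Finset.sum_mul] at h1
    exact h1
  have hps0 : ps i0 = 1 / (∑ j : Fin d, (b/a) ^ (j : ℕ)) := by
    rw [hps_at i0]
    norm_num [hi0]
  have hq0eq : q i0 = 1 / (∑ j : Fin d, (b/a) ^ (j : ℕ)) := by
    apply le_antisymm
    · rw [← hps0]; exact hq0
    · rw [div_le_iff₀ hZ]
      linarith [mul_comm (∑ j : Fin d, (b/a) ^ (j : ℕ)) (q i0)]
  have hterm0 : ∑ i : Fin d, ((b/a)^(i:ℕ) * q i0 - q i) = 0 := by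
    rw [Finset.sum_sub_distrib, hq_sum, ← Finset.sum_mul, hq0eq, mul_one_div,
      div_self (ne_of_gt hZ)]
    ring
  have hall : ∀ i : Fin d, q i = (b/a)^(i:ℕ) * q i0 := by
    have hz := (Finset.sum_eq_zero_iff_of_nonneg
      (fun i _ => sub_nonneg.mpr (hqle' i))).mp hterm0
    intro i
    have := hz i (Finset.mem_univ i)
    linarith [this]
  have hqps : q = ps := by
    funext i
    rw [hall i, hq0eq, hps_at i, mul_one_div]
  rw [tendsto_pi_nhds]
  intro i
  have := hqt i
  rw [hqps] at this
  exact this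


/-- If a decreasing probability vector `p` is majorized by `p*(g,d)` with
`g = b/a`, then the iterates of the max-swap map converge to `p*(g,d)`. -/
theorem maxSwap_converges_to_pstar {d : ℕ} (hd : 2 ≤ d)
    (a b : ℝ) (hb : 0 < b) (hba : b ≤ a) (hab : a + b ≤ 1)
    (p : Fin d → ℝ) (hnn : ∀ i, 0 ≤ p i) (hsum : ∑ i, p i = 1) (hdec : Antitone p)
    (hmaj : IsMajorizedBy p (pstar (b / a) d)) :
    Filter.Tendsto (fun n : ℕ => (maxSwap a b)^[n] p) Filter.atTop
      (nhds (pstar (b / a) d)) := by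
  have ha : 0 < a := lt_of_lt_of_le hb hba
  have hgap : ∀ k, MSAux.PS p k ≤ MSAux.PS (pstar (b/a) d) k := by
    intro k
    rcases Nat.eq_zero_or_pos k with rfl | hk1
    · rw [MSAux.PS_zero, MSAux.PS_zero]
    · by_cases hkd : k ≤ d
      · rw [← MSAux.sumKLargest_eq_PS hdec hkd,
          ← MSAux.sumKLargest_eq_PS (MSAux.pstar_antitone a b hd ha hb hba) hkd]
        exact hmaj.2 k hk1 (by rw [Fintype.card_fin]; exact hkd)
      · rw [MSAux.PS_total p (by omega), MSAux.PS_total (pstar (b/a) d) (by omega), hsum,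
          MSAux.pstar_sum a b hd ha hb]
  exact maxSwap_converges hd a b hb hba hab p ⟨hnn, hsum, hdec, hgap⟩
end

section
/- Let x, y ∈ ℝ^n have nonnegative entries with x majorized by y, and let z ∈ ℝ^m have nonnegative entries. Then the tensor product vector x⊗z ∈ ℝ^{n·m}, with entries (x⊗z)_{(i,j)} = x_i·z_j, is majorized by y⊗z. -/
open Filter Topology Kronecker Matrix
open scoped ComplexOrder

lemma aux_sumSet_finite {ι : Type*} [Fintype ι] (v : ι → ℝ) (k : ℕ) :
    {x : ℝ | ∃ s : Finset ι, s.card = k ∧ ∑ i ∈ s, v i = x}.Finite := by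
  classical
  apply Set.Finite.subset (Set.finite_range (fun s : Finset ι => ∑ i ∈ s, v i))
  rintro x ⟨s, -, rfl⟩
  exact ⟨s, rfl⟩

lemma aux_le_sumKLargest {ι : Type*} [Fintype ι] (v : ι → ℝ) {k : ℕ} {s : Finset ι}
    (hs : s.card = k) : ∑ i ∈ s, v i ≤ sumKLargest v k :=
  le_csSup (aux_sumSet_finite v k).bddAbove ⟨s, hs, rfl⟩

lemma aux_sumKLargest_exists {ι : Type*} [Fintype ι] (v : ι → ℝ) {k : ℕ}
    (hk : k ≤ Fintype.card ι) :
    ∃ s : Finset ι, s.card = k ∧ ∑ i ∈ s, v i = sumKLargest v k := by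
  have hne : {x : ℝ | ∃ s : Finset ι, s.card = k ∧ ∑ i ∈ s, v i = x}.Nonempty := by
    obtain ⟨s, -, hs⟩ := Finset.exists_subset_card_eq (s := (Finset.univ : Finset ι))
      (n := k) (by simpa using hk)
    exact ⟨_, s, hs, rfl⟩
  exact hne.csSup_mem (aux_sumSet_finite v k)

lemma aux_sumKLargest_le {ι : Type*} [Fintype ι] (v : ι → ℝ) {k : ℕ}
    (hk : k ≤ Fintype.card ι) {c : ℝ}
    (h : ∀ s : Finset ι, s.card = k → ∑ i ∈ s, v i ≤ c) :
    sumKLargest v k ≤ c := by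
  have hne : {x : ℝ | ∃ s : Finset ι, s.card = k ∧ ∑ i ∈ s, v i = x}.Nonempty := by
    obtain ⟨s, -, hs⟩ := Finset.exists_subset_card_eq (s := (Finset.univ : Finset ι))
      (n := k) (by simpa using hk)
    exact ⟨_, s, hs, rfl⟩
  refine csSup_le hne ?_
  rintro x ⟨s, hs, rfl⟩
  exact h s hs

lemma aux_sumKLargest_zero {ι : Type*} [Fintype ι] (v : ι → ℝ) : sumKLargest v 0 = 0 := by
  have h : {x : ℝ | ∃ s : Finset ι, s.card = 0 ∧ ∑ i ∈ s, v i = x} = {0} := by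
    ext x
    constructor
    · rintro ⟨s, hs, rfl⟩
      rw [Finset.card_eq_zero] at hs
      simp [hs]
    · rintro rfl
      exact ⟨∅, by simp, by simp⟩
  rw [sumKLargest, h, csSup_singleton]


/-- Majorization is stable under tensoring with a nonnegative vector:
if `x ≺ y` (entrywise nonnegative), then `x⊗z ≺ y⊗z` for any nonnegative `z`. -/
theorem majorization_tensor_stable {n m : ℕ}
    (x y : Fin n → ℝ) (hx : ∀ i, 0 ≤ x i) (hy : ∀ i, 0 ≤ y i)
    (hmaj : IsMajorizedBy x y)
    (z : Fin m → ℝ) (hz : ∀ j, 0 ≤ z j) :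
    IsMajorizedBy (fun q : Fin n × Fin m => x q.1 * z q.2)
      (fun q : Fin n × Fin m => y q.1 * z q.2) := by
  classical
  have hxy : ∀ r : ℕ, r ≤ Fintype.card (Fin n) → sumKLargest x r ≤ sumKLargest y r := by
    intro r hr
    rcases Nat.eq_zero_or_pos r with h0 | h1
    · subst h0; rw [aux_sumKLargest_zero, aux_sumKLargest_zero]
    · exact hmaj.2 r h1 hr
  constructor
  · rw [Fintype.sum_prod_type, Fintype.sum_prod_type]
    simp only [← Finset.mul_sum, ← Finset.sum_mul]
    rw [hmaj.1]
  · intro k hk1 hk2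
    refine aux_sumKLargest_le _ hk2 ?_
    intro S hS
    -- fibers of S over the second coordinate
    set s : Fin m → Finset (Fin n) :=
      fun j => (S.filter (fun q => q.2 = j)).image Prod.fst with hs_def
    have hinj : ∀ j : Fin m, ∀ q ∈ S.filter (fun q => q.2 = j),
        ∀ q' ∈ S.filter (fun q => q.2 = j), q.1 = q'.1 → q = q' := by
      intro j q hq q' hq' h1
      simp only [Finset.mem_filter] at hq hq'
      exact Prod.ext h1 (hq.2.trans hq'.2.symm)
    have hcard_s : ∀ j, (s j).card = (S.filter (fun q => q.2 = j)).card := by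
      intro j
      exact Finset.card_image_of_injOn (fun q hq q' hq' h => hinj j q hq q' hq' h)
    -- the sum over S decomposes fiberwise
    have hsumS : ∑ q ∈ S, x q.1 * z q.2 = ∑ j : Fin m, z j * ∑ i ∈ s j, x i := by
      rw [← Finset.sum_fiberwise S (fun q => q.2) (fun q => x q.1 * z q.2)]
      refine Finset.sum_congr rfl fun j _ => ?_
      rw [hs_def]
      rw [Finset.sum_image (hinj j)]
      rw [Finset.mul_sum]
      refine Finset.sum_congr rfl fun q hq => ?_
      simp only [Finset.mem_filter] at hq
      rw [hq.2]; ring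
    -- choose optimal sets for y of the same cardinalities
    have hcard_le : ∀ j, (s j).card ≤ Fintype.card (Fin n) := fun j =>
      (Finset.card_le_card (Finset.subset_univ (s j))).trans_eq (Finset.card_univ).symm
    choose t ht1 ht2 using fun j : Fin m => aux_sumKLargest_exists y (hcard_le j)
    -- the comparison of fiberwise sums
    have hstep : ∑ j : Fin m, z j * ∑ i ∈ s j, x i ≤ ∑ j : Fin m, z j * ∑ i ∈ t j, y i := by
      refine Finset.sum_le_sum fun j _ => mul_le_mul_of_nonneg_left ?_ (hz j)
      calc ∑ i ∈ s j, x i ≤ sumKLargest x (s j).card := aux_le_sumKLargest x rfl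
        _ ≤ sumKLargest y (s j).card := hxy _ (hcard_le j)
        _ = ∑ i ∈ t j, y i := (ht2 j).symm
    -- assemble the competitor set for y ⊗ z
    set T : Finset (Fin n × Fin m) :=
      Finset.univ.biUnion (fun j : Fin m => (t j).image (fun i => (i, j))) with hT_def
    have hdisj : ∀ j ∈ (Finset.univ : Finset (Fin m)), ∀ j' ∈ (Finset.univ : Finset (Fin m)),
        j ≠ j' → Disjoint ((t j).image (fun i => (i, j))) ((t j').image (fun i => (i, j'))) := by
      intro j _ j' _ hjj'
      rw [Finset.disjoint_left]
      intro q hq hq'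
      simp only [Finset.mem_image] at hq hq'
      obtain ⟨i, -, rfl⟩ := hq
      obtain ⟨i', -, h⟩ := hq'
      exact hjj' ((Prod.mk.injEq _ _ _ _).mp h).2.symm
    have hTcard : T.card = k := by
      rw [hT_def, Finset.card_biUnion hdisj]
      have : ∀ j : Fin m, ((t j).image (fun i => (i, j))).card = (s j).card := by
        intro j
        rw [Finset.card_image_of_injective _ (fun a b h => ((Prod.mk.injEq _ _ _ _).mp h).1),
          ht1 j]
      simp only [this, hcard_s]
      rw [← Finset.card_eq_sum_card_fiberwise (fun q (_ : q ∈ S) => Finset.mem_univ q.2), hS]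
    have hTsum : ∑ q ∈ T, y q.1 * z q.2 = ∑ j : Fin m, z j * ∑ i ∈ t j, y i := by
      rw [hT_def, Finset.sum_biUnion hdisj]
      refine Finset.sum_congr rfl fun j _ => ?_
      rw [Finset.sum_image (fun a _ b _ h => ((Prod.mk.injEq _ _ _ _).mp h).1)]
      rw [Finset.mul_sum]
      exact Finset.sum_congr rfl fun i _ => by ring
    calc ∑ q ∈ S, x q.1 * z q.2 = ∑ j : Fin m, z j * ∑ i ∈ s j, x i := hsumS
      _ ≤ ∑ j : Fin m, z j * ∑ i ∈ t j, y i := hstep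
      _ = ∑ q ∈ T, y q.1 * z q.2 := hTsum.symm
      _ ≤ sumKLargest (fun q : Fin n × Fin m => y q.1 * z q.2) k := aux_le_sumKLargest _ hTcard
end

section
/- Let ℰ_0 ≤ ⋯ ≤ ℰ_{m−1} be energies with ℰ_0 = 0, and let 0 ≤ β_1 ≤ β_2. Then the hotter Gibbs vector is majorized by the colder one: τ(β_1,ℰ) ≺ τ(β_2,ℰ). -/
open Filter Topology Kronecker Matrix
open scoped ComplexOrder

lemma sumKLargest_le' {ι : Type*} [Fintype ι] (v : ι → ℝ) (k : ℕ)
    (hk : k ≤ Fintype.card ι) (c : ℝ)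
    (h : ∀ s : Finset ι, s.card = k → ∑ i ∈ s, v i ≤ c) :
    sumKLargest v k ≤ c := by
  apply csSup_le
  · obtain ⟨t, -, ht⟩ := Finset.exists_subset_card_eq
      (show k ≤ (Finset.univ : Finset ι).card by simpa using hk)
    exact ⟨∑ i ∈ t, v i, t, ht, rfl⟩
  · rintro x ⟨s, hs, rfl⟩
    exact h s hs

lemma le_sumKLargest' {ι : Type*} [Fintype ι] (v : ι → ℝ) (s : Finset ι) :
    ∑ i ∈ s, v i ≤ sumKLargest v s.card := by
  apply le_csSup
  · have : {x : ℝ | ∃ t : Finset ι, t.card = s.card ∧ ∑ i ∈ t, v i = x}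
        = (fun t : Finset ι => ∑ i ∈ t, v i) '' {t | t.card = s.card} := by
      ext x; constructor
      · rintro ⟨t, ht, rfl⟩; exact ⟨t, ht, rfl⟩
      · rintro ⟨t, ht, rfl⟩; exact ⟨t, ht, rfl⟩
    rw [this]
    exact ((Set.toFinite _).image _).bddAbove
  · exact ⟨s, rfl, rfl⟩

/-- The set of indices `< k` in `Fin m`. -/
noncomputable def topSet (m k : ℕ) (hk : k ≤ m) : Finset (Fin m) :=
  Finset.attachFin (Finset.range k)
    (fun x hx => lt_of_lt_of_le (Finset.mem_range.1 hx) hk)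

lemma topSet_card (m k : ℕ) (hk : k ≤ m) : (topSet m k hk).card = k := by
  simp [topSet]

lemma mem_topSet {m k : ℕ} {hk : k ≤ m} {j : Fin m} :
    j ∈ topSet m k hk ↔ (j : ℕ) < k := by
  simp [topSet]

lemma sum_le_sum_topSet {m : ℕ} (v : Fin m → ℝ) (hv : Antitone v)
    (k : ℕ) (hk : k ≤ m) (s : Finset (Fin m)) (hs : s.card = k) :
    ∑ i ∈ s, v i ≤ ∑ i ∈ topSet m k hk, v i := by
  set t := topSet m k hk with ht
  have hcard : s.card = t.card := by rw [hs, topSet_card]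
  have hdiff : (s \ t).card = (t \ s).card := Finset.card_sdiff_comm hcard
  have key : ∑ i ∈ s \ t, v i ≤ ∑ i ∈ t \ s, v i := by
    rcases Finset.eq_empty_or_nonempty (t \ s) with he | hne
    · have : (s \ t) = ∅ := Finset.card_eq_zero.1 (by rw [hdiff, he]; simp)
      rw [this, he]
    · set c := (t \ s).inf' hne v with hc
      have h1 : ∀ i ∈ s \ t, v i ≤ c := by
        intro i hi
        apply Finset.le_inf'
        intro j hj
        apply hv
        have hik : k ≤ (i : ℕ) := by
          have := (Finset.mem_sdiff.1 hi).2
          simpa [ht, mem_topSet, not_lt] using this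
        have hjk : (j : ℕ) < k := mem_topSet.1 (Finset.mem_sdiff.1 hj).1
        exact Fin.le_def.2 (le_of_lt (lt_of_lt_of_le hjk hik))
      calc ∑ i ∈ s \ t, v i ≤ (s \ t).card • c := Finset.sum_le_card_nsmul _ _ _ h1
        _ = (t \ s).card • c := by rw [hdiff]
        _ ≤ ∑ i ∈ t \ s, v i := Finset.card_nsmul_le_sum _ _ _ (fun j hj => Finset.inf'_le _ hj)
  have e1 : ∑ i ∈ s ∩ t, v i + ∑ i ∈ s \ t, v i = ∑ i ∈ s, v i :=
    Finset.sum_inter_add_sum_sdiff s t v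
  have e2 : ∑ i ∈ t ∩ s, v i + ∑ i ∈ t \ s, v i = ∑ i ∈ t, v i :=
    Finset.sum_inter_add_sum_sdiff t s v
  rw [Finset.inter_comm] at e2
  linarith

lemma gibbsVec_sum {m : ℕ} (hm : 0 < m) (β : ℝ) (E : Fin m → ℝ) :
    ∑ j, gibbsVec β E j = 1 := by
  have hS : 0 < ∑ k : Fin m, Real.exp (-(β * E k)) :=
    Finset.sum_pos (fun k _ => Real.exp_pos _) ⟨⟨0, hm⟩, Finset.mem_univ _⟩
  unfold gibbsVec
  rw [← Finset.sum_div, div_self hS.ne']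

lemma gibbsVec_antitone {m : ℕ} (β : ℝ) (hβ : 0 ≤ β) (E : Fin m → ℝ)
    (hmono : Monotone E) : Antitone (gibbsVec β E) := by
  intro i j hij
  unfold gibbsVec
  have hS : 0 < ∑ k : Fin m, Real.exp (-(β * E k)) :=
    Finset.sum_pos (fun k _ => Real.exp_pos _) ⟨i, Finset.mem_univ _⟩
  gcongr
  exact hmono hij

lemma gibbs_top_mono {m : ℕ} (hm : 0 < m) (E : Fin m → ℝ) (hmono : Monotone E)
    (β₁ β₂ : ℝ) (h12 : β₁ ≤ β₂) (k : ℕ) (hk : k ≤ m) :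
    ∑ j ∈ topSet m k hk, gibbsVec β₁ E j ≤ ∑ j ∈ topSet m k hk, gibbsVec β₂ E j := by
  set t := topSet m k hk with htdef
  set a : Fin m → ℝ := fun j => Real.exp (-(β₁ * E j)) with ha
  set b : Fin m → ℝ := fun j => Real.exp (-(β₂ * E j)) with hb
  have hS1 : 0 < ∑ j, a j :=
    Finset.sum_pos (fun j _ => Real.exp_pos _) ⟨⟨0, hm⟩, Finset.mem_univ _⟩
  have hS2 : 0 < ∑ j, b j :=
    Finset.sum_pos (fun j _ => Real.exp_pos _) ⟨⟨0, hm⟩, Finset.mem_univ _⟩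
  have key : ∀ j ∈ t, ∀ l ∈ tᶜ, a j * b l ≤ b j * a l := by
    intro j hj l hl
    have hjk : (j : ℕ) < k := mem_topSet.1 hj
    have hlk : k ≤ (l : ℕ) := by
      have := Finset.mem_compl.1 hl
      simpa [htdef, mem_topSet, not_lt] using this
    have hE : E j ≤ E l := hmono (Fin.le_def.2 (le_of_lt (lt_of_lt_of_le hjk hlk)))
    rw [ha, hb]
    simp only [← Real.exp_add]
    apply Real.exp_le_exp.2
    nlinarith [mul_nonneg (sub_nonneg.2 h12) (sub_nonneg.2 hE)]
  have cross : (∑ j ∈ t, a j) * (∑ l ∈ tᶜ, b l) ≤ (∑ j ∈ t, b j) * (∑ l ∈ tᶜ, a l) := by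
    rw [Finset.sum_mul_sum, Finset.sum_mul_sum]
    exact Finset.sum_le_sum fun j hj => Finset.sum_le_sum fun l hl => key j hj l hl
  have e1 : ∑ j ∈ t, a j + ∑ j ∈ tᶜ, a j = ∑ j, a j := Finset.sum_add_sum_compl t a
  have e2 : ∑ j ∈ t, b j + ∑ j ∈ tᶜ, b j = ∑ j, b j := Finset.sum_add_sum_compl t b
  have goal' : (∑ j ∈ t, a j) * (∑ j, b j) ≤ (∑ j ∈ t, b j) * (∑ j, a j) := by
    rw [← e1, ← e2]
    nlinarith [cross]
  have g1 : ∑ j ∈ t, gibbsVec β₁ E j = (∑ j ∈ t, a j) / ∑ j, a j := by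
    rw [Finset.sum_div]; rfl
  have g2 : ∑ j ∈ t, gibbsVec β₂ E j = (∑ j ∈ t, b j) / ∑ j, b j := by
    rw [Finset.sum_div]; rfl
  rw [g1, g2, div_le_div_iff₀ hS1 hS2]
  exact goal'

/-- A hotter Gibbs vector is majorized by a colder one:
`τ(β₁,ℰ) ≺ τ(β₂,ℰ)` whenever `0 ≤ β₁ ≤ β₂`. -/
theorem gibbs_hotter_majorized_by_colder {m : ℕ} (hm : 0 < m)
    (E : Fin m → ℝ) (hmono : Monotone E) (hE0 : E ⟨0, hm⟩ = 0)
    (β₁ β₂ : ℝ) (h1 : 0 ≤ β₁) (h12 : β₁ ≤ β₂) :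
    IsMajorizedBy (gibbsVec β₁ E) (gibbsVec β₂ E) := by
  constructor
  · rw [gibbsVec_sum hm, gibbsVec_sum hm]
  · intro k hk1 hk2
    have hk : k ≤ m := by simpa using hk2
    apply sumKLargest_le' _ _ hk2
    intro s hs
    calc ∑ i ∈ s, gibbsVec β₁ E i
        ≤ ∑ i ∈ topSet m k hk, gibbsVec β₁ E i :=
          sum_le_sum_topSet _ (gibbsVec_antitone β₁ h1 E hmono) k hk s hs
      _ ≤ ∑ i ∈ topSet m k hk, gibbsVec β₂ E i :=
          gibbs_top_mono hm E hmono β₁ β₂ h12 k hk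
      _ ≤ sumKLargest (gibbsVec β₂ E) k := by
          have := le_sumKLargest' (gibbsVec β₂ E) (topSet m k hk)
          rwa [topSet_card] at this
end

section
/- Let β ≥ 0, machine energies 0 = ℰ_0 ≤ ⋯ ≤ ℰ_{m−1} = ℰ_max, τ = τ(β,ℰ), g = e^{−β ℰ_max}, and d ≥ 1 with p* = p*(g,d). Then p*_i·τ_j ≥ p*_{i+1}·τ_{j'} for all i = 0,…,d−2 and all j, j' ∈ {0,…,m−1}; consequently, for every k = 1,…,d, the sum of the k·m largest entries of the vector p*⊗τ (with entries p*_i·τ_j) equals ∑_{i=0}^{k−1} p*_i. -/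
open Filter Topology Kronecker Matrix
open scoped ComplexOrder

/-- The ordering of the entries of `p*(g,d) ⊗ τ(β,ℰ)` is simple:
`p*_i·τ_j ≥ p*_{i+1}·τ_{j'}` for all `i, j, j'`, and consequently the sum of the `k·m`
largest entries of `p* ⊗ τ` equals `∑_{i<k} p*_i`. -/
theorem pstar_tensor_gibbs_ordering {m d : ℕ} (hm : 0 < m) (hd : 0 < d)
    (β : ℝ) (hβ : 0 ≤ β)
    (E : Fin m → ℝ) (hmono : Monotone E) (hE0 : E ⟨0, hm⟩ = 0)
    (g : ℝ) (hg : g = Real.exp (-(β * E ⟨m - 1, Nat.sub_lt hm Nat.one_pos⟩))) :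
    (∀ (i : Fin d) (hi : (i : ℕ) + 1 < d) (j j' : Fin m),
      pstar g d ⟨(i : ℕ) + 1, hi⟩ * gibbsVec β E j' ≤ pstar g d i * gibbsVec β E j) ∧
    (∀ k : ℕ, 1 ≤ k → k ≤ d →
      sumKLargest (fun q : Fin d × Fin m => pstar g d q.1 * gibbsVec β E q.2) (k * m) =
        ∑ i : Fin d, if (i : ℕ) < k then pstar g d i else 0) := by
  
  classical
  have hg0 : 0 < g := hg ▸ Real.exp_pos _
  have hE_nonneg : ∀ j : Fin m, 0 ≤ E j := by
    intro j
    have : E ⟨0, hm⟩ ≤ E j := hmono (by simp [Fin.le_def])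
    rw [hE0] at this; exact this
  have hg1 : g ≤ 1 := by
    rw [hg]
    apply Real.exp_le_one_iff.mpr
    have := hE_nonneg ⟨m - 1, Nat.sub_lt hm Nat.one_pos⟩
    nlinarith
  have hS : 0 < ∑ j : Fin d, g ^ (j : ℕ) :=
    Finset.sum_pos (fun j _ => pow_pos hg0 _) (by simpa [Finset.univ_nonempty_iff] using Fin.pos_iff_nonempty.mp hd)
  have hZ : 0 < ∑ k : Fin m, Real.exp (-(β * E k)) :=
    Finset.sum_pos (fun k _ => Real.exp_pos _) (by simpa [Finset.univ_nonempty_iff] using Fin.pos_iff_nonempty.mp hm)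
  -- key pairwise inequality
  have key : ∀ (i i' : Fin d), (i : ℕ) < (i' : ℕ) → ∀ j j' : Fin m,
      pstar g d i' * gibbsVec β E j' ≤ pstar g d i * gibbsVec β E j := by
    intro i i' hii j j'
    have h1 : Real.exp (-(β * E j')) ≤ 1 := by
      apply Real.exp_le_one_iff.mpr
      have := hE_nonneg j'
      nlinarith
    have h2 : g ≤ Real.exp (-(β * E j)) := by
      rw [hg]
      apply Real.exp_le_exp.mpr
      have hle : E j ≤ E ⟨m - 1, Nat.sub_lt hm Nat.one_pos⟩ := by
        apply hmono
        simp [Fin.le_def]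
        omega
      nlinarith
    have hnum : g ^ (i' : ℕ) * Real.exp (-(β * E j'))
        ≤ g ^ (i : ℕ) * Real.exp (-(β * E j)) := by
      calc g ^ (i' : ℕ) * Real.exp (-(β * E j'))
          ≤ g ^ (i' : ℕ) * 1 := by
            apply mul_le_mul_of_nonneg_left h1 (le_of_lt (pow_pos hg0 _))
        _ = g ^ (i' : ℕ) := mul_one _
        _ ≤ g ^ ((i : ℕ) + 1) := pow_le_pow_of_le_one (le_of_lt hg0) hg1 hii
        _ = g ^ (i : ℕ) * g := by ring
        _ ≤ g ^ (i : ℕ) * Real.exp (-(β * E j)) := by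
            apply mul_le_mul_of_nonneg_left h2 (le_of_lt (pow_pos hg0 _))
    unfold pstar gibbsVec
    rw [div_mul_div_comm, div_mul_div_comm]
    apply div_le_div_of_nonneg_right hnum
    positivity
  refine ⟨fun i hi j j' => key i ⟨(i : ℕ) + 1, hi⟩ (by simp) j j', ?_⟩
  intro k hk1 hkd
  set v : Fin d × Fin m → ℝ := fun q => pstar g d q.1 * gibbsVec β E q.2 with hv
  set A : Finset (Fin d) := Finset.univ.filter (fun i => (i : ℕ) < k) with hA
  set T : Finset (Fin d × Fin m) := A ×ˢ Finset.univ with hT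
  have hmemT : ∀ q : Fin d × Fin m, q ∈ T ↔ (q.1 : ℕ) < k := by
    intro q; simp [hT, hA]
  have hcardA : A.card = k := by
    have : A = Finset.map (Fin.castLEEmb hkd) Finset.univ := by
      ext i
      simp only [hA, Finset.mem_filter, Finset.mem_univ, true_and, Finset.mem_map,
        Fin.castLEEmb_apply]
      constructor
      · intro h
        exact ⟨⟨(i : ℕ), h⟩, rfl⟩
      · rintro ⟨a, rfl⟩
        exact a.isLt
    rw [this, Finset.card_map, Finset.card_univ, Fintype.card_fin]
  have hcardT : T.card = k * m := by
    rw [hT, Finset.card_product, hcardA, Finset.card_univ, Fintype.card_fin]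
  have hτsum : ∑ j : Fin m, gibbsVec β E j = 1 := by
    unfold gibbsVec
    rw [← Finset.sum_div, div_self (ne_of_gt hZ)]
  have hTsum : ∑ q ∈ T, v q = ∑ i : Fin d, if (i : ℕ) < k then pstar g d i else 0 := by
    rw [hT, Finset.sum_product]
    have : ∀ i ∈ A, ∑ j : Fin m, v (i, j) = pstar g d i := by
      intro i _
      simp only [hv]
      rw [← Finset.mul_sum, hτsum, mul_one]
    rw [Finset.sum_congr rfl this, hA, Finset.sum_filter]
  have hub : ∀ s : Finset (Fin d × Fin m), s.card = k * m → ∑ q ∈ s, v q ≤ ∑ q ∈ T, v q := by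
    intro s hs
    have hsd : (s \ T).card = (T \ s).card := by
      have h1 := Finset.card_sdiff_add_card_inter s T
      have h2 := Finset.card_sdiff_add_card_inter T s
      rw [Finset.inter_comm] at h2
      omega
    have hdiff : ∑ q ∈ s \ T, v q ≤ ∑ q ∈ T \ s, v q := by
      rcases (T \ s).eq_empty_or_nonempty with he | hne
      · have : (s \ T) = ∅ := Finset.card_eq_zero.mp (by rw [hsd, he, Finset.card_empty])
        rw [this, he]
      · have hc1 : ∀ q ∈ s \ T, v q ≤ (T \ s).inf' hne v := by
          intro q hq
          obtain ⟨q0, hq0, hq0c⟩ := Finset.exists_mem_eq_inf' hne v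
          rw [hq0c]
          have hq0T : (q0.1 : ℕ) < k := (hmemT q0).mp (Finset.mem_sdiff.mp hq0).1
          have hqT : k ≤ (q.1 : ℕ) := by
            have := (Finset.mem_sdiff.mp hq).2
            by_contra hcon
            exact this ((hmemT q).mpr (by omega))
          exact key q0.1 q.1 (by omega) q0.2 q.2
        have hc2 : ∀ q ∈ T \ s, (T \ s).inf' hne v ≤ v q := fun q hq => Finset.inf'_le v hq
        calc ∑ q ∈ s \ T, v q ≤ (s \ T).card • (T \ s).inf' hne v :=
              Finset.sum_le_card_nsmul _ _ _ hc1
          _ = (T \ s).card • (T \ s).inf' hne v := by rw [hsd]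
          _ ≤ ∑ q ∈ T \ s, v q := Finset.card_nsmul_le_sum _ _ _ hc2
    calc ∑ q ∈ s, v q = ∑ q ∈ s ∩ T, v q + ∑ q ∈ s \ T, v q :=
          (Finset.sum_inter_add_sum_sdiff s T v).symm
      _ ≤ ∑ q ∈ s ∩ T, v q + ∑ q ∈ T \ s, v q := by linarith
      _ = ∑ q ∈ T ∩ s, v q + ∑ q ∈ T \ s, v q := by rw [Finset.inter_comm]
      _ = ∑ q ∈ T, v q := Finset.sum_inter_add_sum_sdiff T s v
  have : sumKLargest v (k * m) = ∑ q ∈ T, v q := by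
    apply IsGreatest.csSup_eq
    constructor
    · exact ⟨T, hcardT, rfl⟩
    · rintro x ⟨s, hs, rfl⟩
      exact hub s hs
  rw [this, hTsum]
end

section
/- Let β_R, β_H ≥ 0 and 0 < E_S ≤ E_M. Set q_0 = 1/(1 + e^{−β_R E_M}) and q_1 = 1 − q_0 (the Gibbs populations of a qubit of gap E_M at inverse temperature β_R), and h_0 = 1/(1 + e^{−β_H (E_M − E_S)}) and h_1 = 1 − h_0 (the Gibbs populations of a qubit of gap E_M − E_S at inverse temperature β_H). For any p_0 ∈ [0,1], define recursively p_{k+1} = p_k·(1 − q_1·h_0) + (1 − p_k)·q_0·h_1. Then p_k converges as k → ∞ to p_∞ = 1/(1 + e^{−(β_R E_M − β_H (E_M − E_S))}); that is, the steady state of the smallest incoherent (two-qubit machine) refrigerator is the Gibbs state of the target gap E_S at inverse temperature β*_inc determined by β*_inc·E_S = β_R·E_M − β_H·(E_M − E_S). -/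
open Filter Topology Kronecker Matrix
open scoped ComplexOrder

/-- Steady state of the smallest incoherent (two-qubit machine) refrigerator:
iterating `p ↦ p(1 − q_1 h_0) + (1 − p) q_0 h_1` drives the target ground-state population to
`1/(1 + e^{−(β_R E_M − β_H (E_M − E_S))})`, i.e. the Gibbs population of gap `E_S` at the
inverse temperature `β*_inc` with `β*_inc E_S = β_R E_M − β_H (E_M − E_S)`. -/
theorem two_qubit_machine_steady_state (βR βH ES EM : ℝ)
    (hβR : 0 ≤ βR) (hβH : 0 ≤ βH) (hES : 0 < ES) (hESM : ES ≤ EM)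
    (q0 q1 h0 h1 : ℝ)
    (hq0 : q0 = 1 / (1 + Real.exp (-(βR * EM)))) (hq1 : q1 = 1 - q0)
    (hh0 : h0 = 1 / (1 + Real.exp (-(βH * (EM - ES))))) (hh1 : h1 = 1 - h0)
    (p : ℕ → ℝ) (hp0 : 0 ≤ p 0) (hp1 : p 0 ≤ 1)
    (hrec : ∀ k, p (k + 1) = p k * (1 - q1 * h0) + (1 - p k) * (q0 * h1)) :
    Filter.Tendsto p Filter.atTop
      (nhds (1 / (1 + Real.exp (-(βR * EM - βH * (EM - ES)))))) := by

  set a := Real.exp (-(βR * EM)) with ha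
  set b := Real.exp (-(βH * (EM - ES))) with hb
  have hapos : 0 < a := Real.exp_pos _
  have hbpos : 0 < b := Real.exp_pos _
  have hab : Real.exp (-(βR * EM - βH * (EM - ES))) = a / b := by
    rw [ha, hb, ← Real.exp_sub]; ring_nf
  set L : ℝ := 1 / (1 + Real.exp (-(βR * EM - βH * (EM - ES)))) with hL
  have hLval : L = b / (a + b) := by
    rw [hL, hab]
    rw [div_eq_div_iff (by positivity) (by positivity)]
    field_simp
    ring
  set r : ℝ := 1 - (q1 * h0 + q0 * h1) with hr
  have hq0 : q0 = 1 / (1 + a) := hq0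
  have hh0 : h0 = 1 / (1 + b) := hh0
  have hfix : q0 * h1 = L * (q1 * h0 + q0 * h1) := by
    rw [hLval, hq1, hh1, hq0, hh0]
    field_simp
    ring
  have hdiff : ∀ k, p k - L = r ^ k * (p 0 - L) := by
    intro k
    induction k with
    | zero => simp
    | succ n ih =>
      have := hrec n
      rw [pow_succ]
      calc p (n+1) - L = (p n - L) * r := by rw [this, hr]; linear_combination hfix
        _ = r ^ n * (p 0 - L) * r := by rw [ih]
        _ = r ^ n * r * (p 0 - L) := by ring
  have hrabs : |r| < 1 := by
    rw [abs_lt]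
    have h1 : q1 * h0 + q0 * h1 = (a + b) / ((1 + a) * (1 + b)) := by
      rw [hq1, hh1, hq0, hh0]; field_simp; ring
    constructor
    · rw [hr, h1]
      have : (a + b) / ((1 + a) * (1 + b)) < 2 := by
        rw [div_lt_iff₀ (by positivity)]; nlinarith
      linarith
    · rw [hr, h1]
      have : 0 < (a + b) / ((1 + a) * (1 + b)) := by positivity
      linarith
  have hlim : Filter.Tendsto (fun k => L + r ^ k * (p 0 - L)) Filter.atTop (nhds L) := by
    have := (tendsto_pow_atTop_nhds_zero_of_abs_lt_one hrabs).mul_const (p 0 - L)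
    have := this.const_add L
    simpa using this
  have heq : (fun k => L + r ^ k * (p 0 - L)) = p := by
    funext k
    have := hdiff k
    linarith
  exact heq ▸ hlim
end
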